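/- (Corollary 3.1.) Let ρ be a polynomially bounded positive Borel measure on [0,∞) and W_ρ its Källén–Lehmann functional. If the singularity hypothesis holds for W_ρ — that is, there exist a real ω > 2 and a Schwartz function f on ℝ⁴ such that λ^ω W_{ρ,λ}(f) does not converge to 0 as λ → 0⁺ — then the total spectral mass is infinite: ρ([0,∞)) = ∞. This necessary condition is independent of the mass of any single atom of ρ. -/

import Mathlib

open MeasureTheory Filter Topology SchwartzMap
open scoped FourierTransform

/-- The point `(p₀, p) ∈ ℝ⁴` built from a time component `p0 ∈ ℝ` and a
space momentum `p ∈ ℝ³`. -/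
noncomputable def timeSpace (p0 : ℝ) (p : EuclideanSpace ℝ (Fin 3)) :
    EuclideanSpace ℝ (Fin 4) :=
  (EuclideanSpace.equiv (Fin 4) ℝ).symm (Fin.cons p0 (EuclideanSpace.equiv (Fin 3) ℝ p))

/-- The inner Källén–Lehmann momentum integral
`∫_{ℝ³} f̂(√(|p|²+m²), p)/√(|p|²+m²) dp` at squared mass `m2 = m²`,
where `f̂ = 𝓕 f` is the Fourier transform of `f`. -/
noncomputable def KLinner (f : EuclideanSpace ℝ (Fin 4) → ℂ) (m2 : ℝ) : ℂ :=
  ∫ p : EuclideanSpace ℝ (Fin 3),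
    𝓕 f (timeSpace (Real.sqrt (‖p‖ ^ 2 + m2)) p) / (Real.sqrt (‖p‖ ^ 2 + m2) : ℂ)

/-- The Källén–Lehmann two-point functional
`W_ρ(f) = ∫_{[0,∞)} (∫_{ℝ³} f̂(√(|p|²+m²), p)/√(|p|²+m²) dp) dρ(m²)`
associated with a spectral measure `ρ` on `[0,∞)`. -/
noncomputable def KL (ρ : Measure ℝ) (f : EuclideanSpace ℝ (Fin 4) → ℂ) : ℂ :=
  ∫ m2 in Set.Ici (0 : ℝ), KLinner f m2 ∂ρ

/-- The scaled Källén–Lehmann functional `W_{ρ,λ}(f) = λ⁻⁴ W_ρ(f(λ⁻¹ ·))`. -/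
noncomputable def KLscaled (ρ : Measure ℝ) (lam : ℝ) (f : EuclideanSpace ℝ (Fin 4) → ℂ) : ℂ :=
  (lam ^ (4 : ℕ) : ℝ)⁻¹ * KL ρ (fun x => f (lam⁻¹ • x))

section Auxiliary

open Module Set Metric
open scoped RealInnerProductSpace

/-- The spatial norm is dominated by the space-time norm. -/
lemma norm_le_norm_timeSpace (p0 : ℝ) (p : EuclideanSpace ℝ (Fin 3)) :
    ‖p‖ ≤ ‖timeSpace p0 p‖ := by
  have h1 : ‖timeSpace p0 p‖
      = Real.sqrt (∑ i : Fin 4, ‖(Fin.cons p0 (fun j => p j) : Fin 4 → ℝ) i‖ ^ 2) := by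
    rw [EuclideanSpace.norm_eq]
    rfl
  have h2 : (∑ i : Fin 4, ‖(Fin.cons p0 (fun j => p j) : Fin 4 → ℝ) i‖ ^ 2)
      = ‖p0‖ ^ 2 + ∑ j : Fin 3, ‖p j‖ ^ 2 := by
    rw [Fin.sum_univ_succ]
    simp
  have h3 : ‖p‖ = Real.sqrt (∑ j : Fin 3, ‖p j‖ ^ 2) := EuclideanSpace.norm_eq p
  rw [h1, h2, h3]
  apply Real.sqrt_le_sqrt
  have : 0 ≤ ‖p0‖ ^ 2 := by positivity
  linarith

/-- Scaling behaviour of the Fourier transform on `ℝ⁴` (valid without any integrability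
assumption thanks to the junk-value conventions). -/
lemma fourier_scale (f : EuclideanSpace ℝ (Fin 4) → ℂ) {lam : ℝ} (hl : 0 < lam)
    (ξ : EuclideanSpace ℝ (Fin 4)) :
    𝓕 (fun x => f (lam⁻¹ • x)) ξ = (lam ^ (4 : ℕ) : ℝ) • 𝓕 f (lam • ξ) := by
  have h4 : finrank ℝ (EuclideanSpace ℝ (Fin 4)) = 4 := finrank_euclideanSpace_fin
  have key := MeasureTheory.Measure.integral_comp_smul
    (volume : Measure (EuclideanSpace ℝ (Fin 4)))
    (fun v => 𝐞 (-⟪v, ξ⟫) • f (lam⁻¹ • v)) lam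
  rw [h4] at key
  have habs : |((lam ^ (4:ℕ) : ℝ))⁻¹| = (lam ^ (4:ℕ) : ℝ)⁻¹ := by
    rw [abs_of_pos]; positivity
  have key2 : ((lam ^ (4:ℕ) : ℝ))⁻¹ • 𝓕 (fun x => f (lam⁻¹ • x)) ξ = 𝓕 f (lam • ξ) := by
    rw [Real.fourier_eq, Real.fourier_eq, ← habs, ← key]
    apply integral_congr_ae
    filter_upwards with w
    rw [smul_smul, inv_mul_cancel₀ hl.ne', one_smul, real_inner_smul_left,
      ← real_inner_smul_right]
  have hne : (lam ^ (4:ℕ) : ℝ) ≠ 0 := by positivity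
  rw [← key2, smul_smul, mul_inv_cancel₀ hne, one_smul]

/-- Quantitative decay of order `4` for a Schwartz function on `ℝ⁴`. -/
lemma schwartz_decay4 (g : 𝓢(EuclideanSpace ℝ (Fin 4), ℂ)) :
    ∃ D : ℝ, 0 ≤ D ∧ ∀ x, ‖g x‖ ≤ D / (1 + ‖x‖) ^ (4:ℕ) := by
  refine ⟨2 ^ 4 * (Finset.Iic ((4:ℕ),(0:ℕ))).sup (fun m => SchwartzMap.seminorm ℝ m.1 m.2) g,
    by positivity, fun x => ?_⟩
  rw [le_div_iff₀ (by positivity)]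
  have h := one_add_le_sup_seminorm_apply (𝕜 := ℝ) (m := ((4:ℕ),(0:ℕ)))
    (k := 4) (n := 0) le_rfl le_rfl g x
  rw [norm_iteratedFDeriv_zero] at h
  calc ‖g x‖ * (1 + ‖x‖) ^ (4:ℕ) = (1 + ‖x‖) ^ (4:ℕ) * ‖g x‖ := mul_comm _ _
    _ ≤ _ := h

/-- The radial comparison function `((1+|q|)⁴ |q|)⁻¹` is integrable on `ℝ³`. -/
lemma integrable_phi :
    Integrable (fun q : EuclideanSpace ℝ (Fin 3) => ((1 + ‖q‖) ^ (4:ℕ) * ‖q‖)⁻¹) := by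
  have h3 : finrank ℝ (EuclideanSpace ℝ (Fin 3)) = 3 := finrank_euclideanSpace_fin
  set φ : EuclideanSpace ℝ (Fin 3) → ℝ := fun q => ((1 + ‖q‖) ^ (4:ℕ) * ‖q‖)⁻¹ with hφ
  have hpos : ∀ q, 0 ≤ φ q := fun q => by positivity
  have hmeas : Measurable φ := by fun_prop
  refine ⟨hmeas.aestronglyMeasurable, ?_⟩
  rw [hasFiniteIntegral_iff_ofReal (Eventually.of_forall hpos)]
  rw [lintegral_eq_lintegral_meas_le volume (Eventually.of_forall hpos) hmeas.aemeasurable]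
  set mB := (volume : Measure (EuclideanSpace ℝ (Fin 3))) (ball 0 1) with hmB
  have hsub1 : ∀ t : ℝ, 0 < t → t ≤ 1 →
      {a : EuclideanSpace ℝ (Fin 3) | t ≤ φ a} ⊆ closedBall 0 ((t⁻¹) ^ ((5:ℝ)⁻¹)) := by
    intro t ht ht1 a ha
    simp only [mem_setOf_eq] at ha
    rcases eq_or_ne a 0 with rfl | h0
    · simp only [mem_closedBall, dist_self]
      positivity
    have hna : 0 < ‖a‖ := norm_pos_iff.2 h0
    have hb : φ a ≤ (‖a‖ ^ (5:ℕ))⁻¹ := by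
      rw [hφ]
      apply inv_anti₀ (by positivity)
      calc ‖a‖ ^ (5:ℕ) = ‖a‖ ^ (4:ℕ) * ‖a‖ := by ring
        _ ≤ (1 + ‖a‖) ^ (4:ℕ) * ‖a‖ := by gcongr; linarith
    have h5 : ‖a‖ ^ (5:ℕ) ≤ t⁻¹ := by
      rw [← inv_inv (‖a‖ ^ (5:ℕ))]
      exact inv_anti₀ (by positivity) (le_trans ha hb)
    have : (‖a‖ ^ (5:ℕ)) ^ ((5:ℝ)⁻¹) ≤ (t⁻¹) ^ ((5:ℝ)⁻¹) :=
      Real.rpow_le_rpow (by positivity) h5 (by norm_num)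
    rw [← Real.rpow_natCast ‖a‖ 5, ← Real.rpow_mul (norm_nonneg a)] at this
    norm_num at this
    simpa [mem_closedBall, dist_zero_right] using this
  have hsub2 : ∀ t : ℝ, 1 < t →
      {a : EuclideanSpace ℝ (Fin 3) | t ≤ φ a} ⊆ closedBall 0 (t⁻¹) := by
    intro t ht a ha
    simp only [mem_setOf_eq] at ha
    rcases eq_or_ne a 0 with rfl | h0
    · simp only [mem_closedBall, dist_self]; positivity
    have hna : 0 < ‖a‖ := norm_pos_iff.2 h0
    have hb : φ a ≤ ‖a‖⁻¹ := by
      rw [hφ]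
      apply inv_anti₀ hna
      have h1 : (1:ℝ) ≤ (1 + ‖a‖) ^ (4:ℕ) := one_le_pow₀ (by linarith)
      nlinarith
    have : ‖a‖ ≤ t⁻¹ := by
      rw [← inv_inv ‖a‖]
      exact inv_anti₀ (by linarith) (le_trans ha hb)
    simpa [mem_closedBall, dist_zero_right] using this
  have hfin1 : (∫⁻ t in Ioc (0:ℝ) 1, ENNReal.ofReal (t ^ (-(3:ℝ)/5))) < ⊤ := by
    apply IntegrableOn.setLIntegral_lt_top
    rw [← intervalIntegrable_iff_integrableOn_Ioc_of_le zero_le_one]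
    exact intervalIntegral.intervalIntegrable_rpow' (by norm_num)
  have hfin2 : (∫⁻ t in Ioi (1:ℝ), ENNReal.ofReal (t ^ (-(3:ℝ)))) < ⊤ := by
    apply IntegrableOn.setLIntegral_lt_top
    exact integrableOn_Ioi_rpow_of_lt (by norm_num) one_pos
  calc ∫⁻ t in Ioi 0, volume {a | t ≤ φ a}
      ≤ ∫⁻ t in Ioc 0 1 ∪ Ioi 1, volume {a | t ≤ φ a} :=
        lintegral_mono_set Ioi_subset_Ioc_union_Ioi
    _ ≤ (∫⁻ t in Ioc 0 1, volume {a | t ≤ φ a}) + ∫⁻ t in Ioi 1, volume {a | t ≤ φ a} :=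
        lintegral_union_le _ _ _
    _ < ⊤ := ENNReal.add_lt_top.2 ⟨?_, ?_⟩
  · have hb : ∀ t ∈ Ioc (0:ℝ) 1,
        volume {a : EuclideanSpace ℝ (Fin 3) | t ≤ φ a} ≤ ENNReal.ofReal (t ^ (-(3:ℝ)/5)) * mB := by
      intro t ht
      calc volume {a : EuclideanSpace ℝ (Fin 3) | t ≤ φ a}
          ≤ volume (closedBall (0 : EuclideanSpace ℝ (Fin 3)) ((t⁻¹) ^ ((5:ℝ)⁻¹))) :=
            measure_mono (hsub1 t ht.1 ht.2)
        _ = ENNReal.ofReal (((t⁻¹) ^ ((5:ℝ)⁻¹)) ^ finrank ℝ (EuclideanSpace ℝ (Fin 3))) * mB :=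
            Measure.addHaar_closedBall _ _ (Real.rpow_nonneg (inv_nonneg.2 ht.1.le) _)
        _ = ENNReal.ofReal (t ^ (-(3:ℝ)/5)) * mB := by
            rw [h3]
            congr 2
            rw [← Real.rpow_natCast ((t⁻¹) ^ ((5:ℝ)⁻¹)) 3, ← Real.rpow_mul (inv_nonneg.2 ht.1.le),
              Real.inv_rpow ht.1.le, ← Real.rpow_neg ht.1.le]
            norm_num
    calc (∫⁻ t in Ioc (0:ℝ) 1, volume {a : EuclideanSpace ℝ (Fin 3) | t ≤ φ a})
        ≤ ∫⁻ t in Ioc (0:ℝ) 1, ENNReal.ofReal (t ^ (-(3:ℝ)/5)) * mB :=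
          setLIntegral_mono' measurableSet_Ioc hb
      _ = (∫⁻ t in Ioc (0:ℝ) 1, ENNReal.ofReal (t ^ (-(3:ℝ)/5))) * mB :=
          lintegral_mul_const' _ _ measure_ball_lt_top.ne
      _ < ⊤ := ENNReal.mul_lt_top hfin1 measure_ball_lt_top
  · have hb : ∀ t ∈ Ioi (1:ℝ),
        volume {a : EuclideanSpace ℝ (Fin 3) | t ≤ φ a} ≤ ENNReal.ofReal (t ^ (-(3:ℝ))) * mB := by
      intro t ht
      have ht0 : (0:ℝ) ≤ t := by have := mem_Ioi.mp ht; linarith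
      calc volume {a : EuclideanSpace ℝ (Fin 3) | t ≤ φ a}
          ≤ volume (closedBall (0 : EuclideanSpace ℝ (Fin 3)) (t⁻¹)) :=
            measure_mono (hsub2 t ht)
        _ = ENNReal.ofReal ((t⁻¹) ^ finrank ℝ (EuclideanSpace ℝ (Fin 3))) * mB :=
            Measure.addHaar_closedBall _ _ (inv_nonneg.2 ht0)
        _ = ENNReal.ofReal (t ^ (-(3:ℝ))) * mB := by
            rw [h3]
            congr 2
            rw [← Real.rpow_natCast (t⁻¹) 3, Real.inv_rpow ht0, ← Real.rpow_neg ht0]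
            norm_num
    calc (∫⁻ t in Ioi (1:ℝ), volume {a : EuclideanSpace ℝ (Fin 3) | t ≤ φ a})
        ≤ ∫⁻ t in Ioi (1:ℝ), ENNReal.ofReal (t ^ (-(3:ℝ))) * mB :=
          setLIntegral_mono' measurableSet_Ioi hb
      _ = (∫⁻ t in Ioi (1:ℝ), ENNReal.ofReal (t ^ (-(3:ℝ)))) * mB :=
          lintegral_mul_const' _ _ measure_ball_lt_top.ne
      _ < ⊤ := ENNReal.mul_lt_top hfin2 measure_ball_lt_top

end Auxiliary

/-- Corollary 3.1: Let `ρ` be a polynomially bounded positive Borel measure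
on `[0,∞)`. If the singularity hypothesis holds for `W_ρ`, i.e. there exist `ω > 2` and a
Schwartz `f` on ℝ⁴ such that `λ^ω W_{ρ,λ}(f)` does not tend to `0` as `λ → 0⁺`, then the
total spectral mass is infinite: `ρ([0,∞)) = ∞`. -/
theorem kl_singularity_implies_infinite_mass (ρ : Measure ℝ) (C : ℝ) (N : ℕ)
    (hρ : ∀ L : ℝ, 0 ≤ L → ρ (Set.Icc 0 L) ≤ ENNReal.ofReal (C * (1 + L ^ N)))
    (hsing : ∃ ω : ℝ, 2 < ω ∧ ∃ f : 𝓢(EuclideanSpace ℝ (Fin 4), ℂ),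
      ¬ Tendsto (fun lam : ℝ => ((lam ^ ω : ℝ) : ℂ) * KLscaled ρ lam ⇑f)
          (𝓝[>] (0 : ℝ)) (𝓝 0)) :
    ρ (Set.Ici (0 : ℝ)) = ⊤ := by
  by_contra hfin
  obtain ⟨ω, hω, f, hf⟩ := hsing
  apply hf
  haveI : IsFiniteMeasure (ρ.restrict (Set.Ici (0:ℝ))) :=
    ⟨by rwa [Measure.restrict_apply_univ, lt_top_iff_ne_top]⟩
  obtain ⟨D, hD0, hD⟩ := schwartz_decay4 (SchwartzMap.fourierTransformCLM ℝ f)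
  have hDf : ∀ x, ‖𝓕 (⇑f) x‖ ≤ D / (1 + ‖x‖) ^ (4:ℕ) := by
    intro x
    simpa [SchwartzMap.fourier_coe] using hD x
  set I : ℝ := ∫ q : EuclideanSpace ℝ (Fin 3), ((1 + ‖q‖) ^ (4:ℕ) * ‖q‖)⁻¹ with hI
  have hI0 : 0 ≤ I := integral_nonneg fun q => by positivity
  set R : ℝ := (ρ (Set.Ici (0:ℝ))).toReal with hR
  have hR0 : 0 ≤ R := ENNReal.toReal_nonneg
  have key : ∀ lam : ℝ, 0 < lam →
      ‖((lam ^ ω : ℝ) : ℂ) * KLscaled ρ lam ⇑f‖ ≤ (D * I * R) * lam ^ (ω - 2) := by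
    intro lam hl
    have hinner : ∀ m2 : ℝ, 0 ≤ m2 →
        ‖KLinner (fun x => f (lam⁻¹ • x)) m2‖ ≤ D * I * lam ^ (2:ℕ) := by
      intro m2 hm2
      have hint : Integrable (fun p : EuclideanSpace ℝ (Fin 3) =>
          D * lam ^ (5:ℕ) * ((1 + ‖lam • p‖) ^ (4:ℕ) * ‖lam • p‖)⁻¹) :=
        (integrable_phi.comp_smul hl.ne').const_mul _
      have hae : ∀ᵐ p : EuclideanSpace ℝ (Fin 3), p ≠ 0 :=
        ae_iff.2 (by simp [measure_singleton])
      have hbd : ∀ᵐ p : EuclideanSpace ℝ (Fin 3),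
          ‖𝓕 (fun x => f (lam⁻¹ • x)) (timeSpace (Real.sqrt (‖p‖ ^ 2 + m2)) p)
              / (Real.sqrt (‖p‖ ^ 2 + m2) : ℂ)‖
            ≤ D * lam ^ (5:ℕ) * ((1 + ‖lam • p‖) ^ (4:ℕ) * ‖lam • p‖)⁻¹ := by
        filter_upwards [hae] with p hp
        have hnp : 0 < ‖p‖ := norm_pos_iff.2 hp
        set c := Real.sqrt (‖p‖ ^ 2 + m2) with hc
        have hcp : ‖p‖ ≤ c := by
          have h := Real.sqrt_le_sqrt (le_add_of_nonneg_right hm2 : ‖p‖ ^ 2 ≤ ‖p‖ ^ 2 + m2)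
          rwa [Real.sqrt_sq (norm_nonneg p)] at h
        have hc0 : 0 < c := lt_of_lt_of_le hnp hcp
        have hsmul : ‖lam • p‖ = lam * ‖p‖ := by
          rw [norm_smul, Real.norm_eq_abs, abs_of_pos hl]
        rw [fourier_scale (⇑f) hl, norm_div, norm_smul, hsmul]
        have h1 : ‖(lam ^ (4:ℕ) : ℝ)‖ = lam ^ (4:ℕ) := by
          rw [Real.norm_eq_abs, abs_of_pos (by positivity)]
        have h2 : ‖((c : ℝ) : ℂ)‖ = c := by
          rw [Complex.norm_real, Real.norm_eq_abs, abs_of_pos hc0]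
        rw [h1, h2]
        have hξ : ‖p‖ ≤ ‖timeSpace c p‖ := norm_le_norm_timeSpace c p
        have h3 : ‖𝓕 (⇑f) (lam • timeSpace c p)‖ ≤ D / (1 + lam * ‖p‖) ^ (4:ℕ) := by
          refine le_trans (hDf _) ?_
          gcongr
          rw [norm_smul, Real.norm_eq_abs, abs_of_pos hl]
          exact mul_le_mul_of_nonneg_left hξ hl.le
        have hone : (0:ℝ) < 1 + lam * ‖p‖ := by positivity
        calc lam ^ (4:ℕ) * ‖𝓕 (⇑f) (lam • timeSpace c p)‖ / c
            ≤ lam ^ (4:ℕ) * (D / (1 + lam * ‖p‖) ^ (4:ℕ)) / ‖p‖ := by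
              apply div_le_div₀ (by positivity) _ hnp hcp
              exact mul_le_mul_of_nonneg_left h3 (by positivity)
          _ = D * lam ^ (5:ℕ) * ((1 + lam * ‖p‖) ^ (4:ℕ) * (lam * ‖p‖))⁻¹ := by
              field_simp
      have hcs : (∫ p : EuclideanSpace ℝ (Fin 3),
          ((1 + ‖lam • p‖) ^ (4:ℕ) * ‖lam • p‖)⁻¹) = (lam ^ (3:ℕ))⁻¹ * I := by
        have h3 : Module.finrank ℝ (EuclideanSpace ℝ (Fin 3)) = 3 := finrank_euclideanSpace_fin
        have := MeasureTheory.Measure.integral_comp_smul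
          (volume : Measure (EuclideanSpace ℝ (Fin 3)))
          (fun q : EuclideanSpace ℝ (Fin 3) => ((1 + ‖q‖) ^ (4:ℕ) * ‖q‖)⁻¹) lam
        rw [h3] at this
        rw [this, abs_of_pos (by positivity), smul_eq_mul, hI]
      calc ‖KLinner (fun x => f (lam⁻¹ • x)) m2‖
          ≤ ∫ p : EuclideanSpace ℝ (Fin 3),
              ‖𝓕 (fun x => f (lam⁻¹ • x)) (timeSpace (Real.sqrt (‖p‖ ^ 2 + m2)) p)
                / (Real.sqrt (‖p‖ ^ 2 + m2) : ℂ)‖ := norm_integral_le_integral_norm _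
        _ ≤ ∫ p : EuclideanSpace ℝ (Fin 3),
              D * lam ^ (5:ℕ) * ((1 + ‖lam • p‖) ^ (4:ℕ) * ‖lam • p‖)⁻¹ :=
            integral_mono_of_nonneg (Eventually.of_forall fun p => norm_nonneg _) hint hbd
        _ = D * lam ^ (5:ℕ) * ((lam ^ (3:ℕ))⁻¹ * I) := by
            rw [integral_const_mul, hcs]
        _ = D * I * lam ^ (2:ℕ) := by
            field_simp
    have houter : ‖KL ρ (fun x => f (lam⁻¹ • x))‖ ≤ D * I * lam ^ (2:ℕ) * R := by
      have hae2 : ∀ᵐ m2 ∂ρ.restrict (Set.Ici (0:ℝ)),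
          ‖KLinner (fun x => f (lam⁻¹ • x)) m2‖ ≤ D * I * lam ^ (2:ℕ) :=
        (ae_restrict_mem measurableSet_Ici).mono fun m2 hm2 => hinner m2 hm2
      have h := norm_integral_le_of_norm_le_const hae2
      rw [measureReal_restrict_apply_univ] at h
      exact h
    have hnorm : ‖((lam ^ ω : ℝ) : ℂ) * KLscaled ρ lam ⇑f‖
        = lam ^ ω * ((lam ^ (4:ℕ))⁻¹ * ‖KL ρ (fun x => f (lam⁻¹ • x))‖) := by
      rw [KLscaled, norm_mul, norm_mul, Complex.norm_real, Complex.norm_real,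
        Real.norm_eq_abs, Real.norm_eq_abs, abs_of_pos (Real.rpow_pos_of_pos hl ω),
        abs_of_pos (by positivity)]
    rw [hnorm]
    calc lam ^ ω * ((lam ^ (4:ℕ))⁻¹ * ‖KL ρ (fun x => f (lam⁻¹ • x))‖)
        ≤ lam ^ ω * ((lam ^ (4:ℕ))⁻¹ * (D * I * lam ^ (2:ℕ) * R)) :=
          mul_le_mul_of_nonneg_left
            (mul_le_mul_of_nonneg_left houter (by positivity))
            (Real.rpow_nonneg hl.le ω)
        _ = (D * I * R) * lam ^ (ω - 2) := by
          rw [Real.rpow_sub hl, show lam ^ (2:ℝ) = lam ^ (2:ℕ) by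
            rw [← Real.rpow_natCast lam 2]; norm_num]
          field_simp
  have htend : Tendsto (fun lam : ℝ => (D * I * R) * lam ^ (ω - 2)) (𝓝[>] (0:ℝ)) (𝓝 0) := by
    have h1 : Tendsto (fun lam : ℝ => lam ^ (ω - 2)) (𝓝 0) (𝓝 ((0:ℝ) ^ (ω - 2))) :=
      (Real.continuousAt_rpow_const 0 (ω - 2) (Or.inr (by linarith))).tendsto
    rw [Real.zero_rpow (by linarith : ω - 2 ≠ 0)] at h1
    have h1' : Tendsto (fun lam : ℝ => lam ^ (ω - 2)) (𝓝[>] (0:ℝ)) (𝓝 0) :=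
      h1.mono_left nhdsWithin_le_nhds
    simpa using h1'.const_mul (D * I * R)
  refine squeeze_zero_norm' ?_ htend
  filter_upwards [eventually_mem_nhdsWithin] with lam hlam
  exact key lam hlam
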